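/- Let V be a real inner product space and let α₁, β₁, α₂, β₂ ∈ V satisfy ⟪α₁,α₁⟫ = ⟪β₁,β₁⟫ = ⟪β₂,β₂⟫ = ⟪α₂,α₂⟫ = 2, ⟪α₁,β₁⟫ = −1, and ⟪α₁ + β₁, β₂⟫ = −1. For any γ ∈ V with ⟪γ,γ⟫ = 2 let s_γ : V → V denote the reflection s_γ(x) = x − ⟪x,γ⟫ γ. Then s_{α₁+β₁} ∘ (s_{α₁} ∘ s_{β₁} ∘ s_{α₂} ∘ s_{β₂}) ∘ s_{α₁+β₁} = s_{α₁} ∘ s_{α₂} ∘ s_{α₁+β₁+β₂} ∘ s_{β₂}; in particular, the element w_o = s_{α₁} s_{β₁} s_{α₂} s_{β₂} is conjugate to w_õ = s_{α₁} s_{α₂} s_{α₁+β₁+β₂} s_{β₂} (note s_{α₁+β₁+β₂} = s_{−(α₁+β₁+β₂)}). -/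
import Mathlib

open scoped RealInnerProductSpace

theorem stmt19 {V : Type*} [NormedAddCommGroup V] [InnerProductSpace ℝ V]
    (α₁ β₁ α₂ β₂ : V)
    (s : V → V → V) (hs : ∀ γ x, s γ x = x - ⟪x, γ⟫ • γ)
    (h1 : ⟪α₁, α₁⟫ = 2) (h2 : ⟪β₁, β₁⟫ = 2) (h3 : ⟪β₂, β₂⟫ = 2) (h4 : ⟪α₂, α₂⟫ = 2)
    (h5 : ⟪α₁, β₁⟫ = -1) (h6 : ⟪α₁ + β₁, β₂⟫ = -1) :
    s (α₁ + β₁) ∘ (s α₁ ∘ s β₁ ∘ s α₂ ∘ s β₂) ∘ s (α₁ + β₁) =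
      s α₁ ∘ s α₂ ∘ s (α₁ + β₁ + β₂) ∘ s β₂ := by
  have h5' : ⟪β₁, α₁⟫ = -1 := by rw [real_inner_comm]; exact h5
  have h6' : ⟪α₁, β₂⟫ + ⟪β₁, β₂⟫ = -1 := by rw [← inner_add_left]; exact h6
  have c1 : ⟪β₂, α₁⟫ = ⟪α₁, β₂⟫ := real_inner_comm _ _
  have c2 : ⟪β₂, β₁⟫ = ⟪β₁, β₂⟫ := real_inner_comm _ _
  have c3 : ⟪α₂, α₁⟫ = ⟪α₁, α₂⟫ := real_inner_comm _ _
  have c4 : ⟪α₂, β₁⟫ = ⟪β₁, α₂⟫ := real_inner_comm _ _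
  have c5 : ⟪β₂, α₂⟫ = ⟪α₂, β₂⟫ := real_inner_comm _ _
  have hb : ⟪β₁, β₂⟫ = -1 - ⟪α₁, β₂⟫ := by linarith
  funext x
  simp only [Function.comp_apply, hs, inner_sub_left, inner_add_left, inner_add_right,
    real_inner_smul_left, inner_sub_right, smul_add, smul_sub, smul_smul,
    h1, h2, h3, h4, h5, h5', c1, c2, c3, c4, c5, hb]
  module
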